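/- Fix d ∈ ℕ and α ∈ (0,1). Let τ* = ([0,1)^{d−1} × [0,2)) \ ([1−α,1)^{d−1} × [2−α,2)) be the notched-cube supertile and let A be the d×d real matrix with entries A_{i,i} = 1 for i < d, A_{i+1,i} = −α for i < d, A_{i,d} = 1−α for i < d, A_{d,d} = 2−α, and all other entries 0. Then τ* is a fundamental domain for the translation action of Aℤ^d on ℝ^d: the translates {τ* + Av : v ∈ ℤ^d} are pairwise disjoint and their union is ℝ^d. In particular there is a periodic tiling of ℝ^d by translates of τ*. -/

import Mathlib

open Set

/-- The matrix `A` of the paper (0-based indexing): the last column (index `d-1`) is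
`(1-α, …, 1-α, 2-α)ᵀ`, the remaining diagonal entries are `1`, the subdiagonal entries
are `-α`, and all other entries are `0`. -/
noncomputable def Amat (d : ℕ) (α : ℝ) : Matrix (Fin d) (Fin d) ℝ :=
  Matrix.of fun i j =>
    if (j : ℕ) = d - 1 then (if (i : ℕ) = d - 1 then 2 - α else 1 - α)
    else if i = j then 1
    else if (i : ℕ) = (j : ℕ) + 1 then -α
    else 0

/-- The notched-cube supertile
`τ* = ([0,1)^{d-1} × [0,2)) \ ([1-α,1)^{d-1} × [2-α,2))` in `ℝ^d`
(here the last coordinate has index `d-1`). -/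
def superTile (d : ℕ) (α : ℝ) : Set (Fin d → ℝ) :=
  {x | (∀ j : Fin d, (j : ℕ) < d - 1 → 0 ≤ x j ∧ x j < 1) ∧
        ∀ j : Fin d, (j : ℕ) = d - 1 → 0 ≤ x j ∧ x j < 2} \
    {x | (∀ j : Fin d, (j : ℕ) < d - 1 → 1 - α ≤ x j ∧ x j < 1) ∧
        ∀ j : Fin d, (j : ℕ) = d - 1 → 2 - α ≤ x j ∧ x j < 2}

namespace STAux

noncomputable def W (α : ℝ) (X : ℕ → ℝ) (m : ℤ) : ℕ → ℤ
  | 0 => 0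
  | i + 1 => ⌊X i + α * (W α X m i) - (1 - α) * m⌋

noncomputable def u (α : ℝ) (X : ℕ → ℝ) (m : ℤ) (i : ℕ) : ℝ :=
  X i + α * (W α X m i) - (1 - α) * m

lemma W_succ (α : ℝ) (X : ℕ → ℝ) (m : ℤ) (i : ℕ) :
    W α X m (i + 1) = ⌊u α X m i⌋ := rfl

noncomputable def G (d : ℕ) (α : ℝ) (X : ℕ → ℝ) (m : ℤ) : ℝ :=
  X (d - 1) + α * (W α X m (d - 1)) - (2 - α) * m

lemma u_succm (α : ℝ) (X : ℕ → ℝ) (m : ℤ) (i : ℕ) :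
    u α X (m + 1) i
      = u α X m i - α * ((W α X m i - W α X (m + 1) i : ℤ) : ℝ) - (1 - α) := by
  simp only [u]
  push_cast
  ring

lemma key (α : ℝ) (X : ℕ → ℝ) (h0 : 0 < α) (h1 : α < 1) (m : ℤ) (i : ℕ) :
    (W α X m i - W α X (m + 1) i = 0 ∨ W α X m i - W α X (m + 1) i = 1) ∧
    (W α X m i - W α X (m + 1) i = 0 ↔ ∀ k < i, 1 - α ≤ Int.fract (u α X m k)) := by
  induction i with
  | zero => simp [W]
  | succ i ih =>
    have hfr0 : 0 ≤ Int.fract (u α X m i) := Int.fract_nonneg _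
    have hfr1 : Int.fract (u α X m i) < 1 := Int.fract_lt_one _
    have hfract : Int.fract (u α X m i) = u α X m i - ⌊u α X m i⌋ :=
      (Int.self_sub_floor _).symm
    rcases ih.1 with h | h
    · have hcast : ((W α X m i - W α X (m + 1) i : ℤ) : ℝ) = 0 := by rw [h]; norm_num
      have hu : u α X (m + 1) i = u α X m i - (1 - α) := by
        rw [u_succm, hcast]; ring
      by_cases hf : 1 - α ≤ Int.fract (u α X m i)
      · have hfl : ⌊u α X m i - (1 - α)⌋ = ⌊u α X m i⌋ := by
          rw [Int.floor_eq_iff]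
          constructor
          · linarith
          · push_cast; linarith
        have hδ : W α X m (i + 1) - W α X (m + 1) (i + 1) = 0 := by
          rw [W_succ, W_succ, hu, hfl]; ring
        refine ⟨Or.inl hδ, ?_⟩
        simp only [hδ, true_iff]
        intro k hk
        rcases Nat.lt_succ_iff_lt_or_eq.mp hk with hk' | hk'
        · exact ih.2.mp h k hk'
        · subst hk'; exact hf
      · have hfl : ⌊u α X m i - (1 - α)⌋ = ⌊u α X m i⌋ - 1 := by
          rw [Int.floor_eq_iff]
          push_cast
          constructor
          · linarith
          · linarith [not_le.mp hf]
        have hδ : W α X m (i + 1) - W α X (m + 1) (i + 1) = 1 := by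
          rw [W_succ, W_succ, hu, hfl]; ring
        refine ⟨Or.inr hδ, ?_⟩
        constructor
        · intro h'; omega
        · intro h'; exact absurd (h' i (Nat.lt_succ_self i)) hf
    · have hcast : ((W α X m i - W α X (m + 1) i : ℤ) : ℝ) = 1 := by rw [h]; norm_num
      have hu : u α X (m + 1) i = u α X m i - 1 := by
        rw [u_succm, hcast]; ring
      have hfl : ⌊u α X m i - 1⌋ = ⌊u α X m i⌋ - 1 := by
        have := Int.floor_sub_intCast (u α X m i) 1
        push_cast at this ⊢
        simpa using this
      have hδ : W α X m (i + 1) - W α X (m + 1) (i + 1) = 1 := by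
        rw [W_succ, W_succ, hu, hfl]; ring
      refine ⟨Or.inr hδ, ?_⟩
      constructor
      · intro h'; omega
      · intro h'
        have : W α X m i - W α X (m + 1) i = 0 :=
          ih.2.mpr (fun k hk => h' k (Nat.lt_succ_of_lt hk))
        omega

lemma G_step (d : ℕ) (α : ℝ) (X : ℕ → ℝ) (m : ℤ) :
    G d α X (m + 1)
      = G d α X m - (2 - α)
        - α * ((W α X m (d - 1) - W α X (m + 1) (d - 1) : ℤ) : ℝ) := by
  simp only [G]
  push_cast
  ring

lemma G_step_le (d : ℕ) (α : ℝ) (X : ℕ → ℝ) (h0 : 0 < α) (h1 : α < 1) (m : ℤ) :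
    G d α X m - 2 ≤ G d α X (m + 1) ∧ G d α X (m + 1) ≤ G d α X m - (2 - α) := by
  have hk := (key α X h0 h1 m (d - 1)).1
  rw [G_step]
  rcases hk with h | h <;> rw [h] <;> push_cast <;> constructor <;> linarith

lemma G_mono (d : ℕ) (α : ℝ) (X : ℕ → ℝ) (h0 : 0 < α) (h1 : α < 1)
    {m m' : ℤ} (h : m ≤ m') : G d α X m' ≤ G d α X m := by
  refine Int.le_induction (motive := fun z _ => G d α X z ≤ G d α X m) (le_refl _)
    (fun n hn ih => ?_) m' h
  have := (G_step_le d α X h0 h1 n).2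
  linarith

lemma G_add_nat (d : ℕ) (α : ℝ) (X : ℕ → ℝ) (h0 : 0 < α) (h1 : α < 1)
    (m : ℤ) (n : ℕ) : G d α X (m + n) ≤ G d α X m - (2 - α) * n := by
  induction n with
  | zero => simp
  | succ n ih =>
    have h2 := (G_step_le d α X h0 h1 (m + n)).2
    have he : ((m : ℤ) + (n + 1 : ℕ)) = (m + n) + 1 := by push_cast; ring
    rw [he]
    push_cast
    push_cast at ih
    linarith

lemma exists_unique_sign (d : ℕ) (α : ℝ) (X : ℕ → ℝ) (h0 : 0 < α) (h1 : α < 1) :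
    ∃! m : ℤ, 0 ≤ G d α X m ∧ G d α X (m + 1) < 0 := by
  classical
  have h2α : 0 < 2 - α := by linarith
  have hneg : ∃ z : ℤ, G d α X z < 0 := by
    obtain ⟨n, hn⟩ := exists_nat_gt (G d α X 0 / (2 - α))
    refine ⟨(0 : ℤ) + n, ?_⟩
    have h' := G_add_nat d α X h0 h1 0 n
    have : G d α X 0 < (2 - α) * n := by
      rw [div_lt_iff₀ h2α] at hn; linarith
    linarith
  obtain ⟨n0, hn0⟩ := exists_nat_gt (-(G d α X 0) / (2 - α))
  have hb : 0 ≤ G d α X (0 - n0) := by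
    have h' := G_add_nat d α X h0 h1 (0 - n0) n0
    have he : ((0 : ℤ) - n0 + n0) = 0 := by ring
    rw [he] at h'
    have : -(G d α X 0) < (2 - α) * n0 := by
      rw [div_lt_iff₀ h2α] at hn0; linarith
    linarith
  set b : ℤ := 0 - n0 with hbdef
  have hlbd : ∀ z : ℤ, G d α X z < 0 → b ≤ z := by
    intro z hz
    by_contra hc
    push_neg at hc
    have := G_mono d α X h0 h1 (le_of_lt hc)
    linarith
  obtain ⟨lb, hlb, hleast⟩ := Int.exists_least_of_bdd (P := fun z => G d α X z < 0)
    ⟨b, hlbd⟩ hneg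
  refine ⟨lb - 1, ⟨?_, by simpa using hlb⟩, ?_⟩
  · by_contra hc
    push_neg at hc
    have := hleast _ hc
    omega
  · rintro m' ⟨hm1, hm2⟩
    have h1' := hleast _ hm2
    have h3' : m' < lb := by
      by_contra hc
      push_neg at hc
      have := G_mono d α X h0 h1 hc
      linarith
    omega

lemma mulVec_Amat {d : ℕ} (hd : 1 ≤ d) (α : ℝ) (w : Fin d → ℝ) (i : Fin d) :
    (Amat d α).mulVec w i =
      (if (i : ℕ) = d - 1 then 2 - α else 1 - α) * w ⟨d - 1, by omega⟩
      + (if (i : ℕ) = d - 1 then 0 else w i)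
      + (if _ : 1 ≤ (i : ℕ) then -α * w ⟨(i : ℕ) - 1, by omega⟩ else 0) := by
  have hid := i.isLt
  have hstart : (Amat d α).mulVec w i = ∑ j, Amat d α i j * w j := rfl
  set L : Fin d := ⟨d - 1, by omega⟩ with hLdef
  by_cases h1i : 1 ≤ (i : ℕ)
  · set J : Fin d := ⟨(i : ℕ) - 1, by omega⟩ with hJdef
    have hsum : ∀ j : Fin d, Amat d α i j * w j =
        (if j = L then (if (i : ℕ) = d - 1 then 2 - α else 1 - α) * w j else 0)
        + (if j = i then (if (i : ℕ) = d - 1 then 0 else w j) else 0)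
        + (if j = J then -α * w j else 0) := by
      intro j
      have hjd := j.isLt
      simp only [Amat, Matrix.of_apply, Fin.ext_iff, hLdef, hJdef]
      split_ifs <;> first | ring1 | (exfalso; omega)
    rw [hstart, Finset.sum_congr rfl (fun j _ => hsum j)]
    rw [Finset.sum_add_distrib, Finset.sum_add_distrib]
    simp [Finset.sum_ite_eq', h1i, hJdef]
  · have hi0 : (i : ℕ) = 0 := by omega
    have hsum : ∀ j : Fin d, Amat d α i j * w j =
        (if j = L then (if (i : ℕ) = d - 1 then 2 - α else 1 - α) * w j else 0)
        + (if j = i then (if (i : ℕ) = d - 1 then 0 else w j) else 0) := by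
      intro j
      have hjd := j.isLt
      simp only [Amat, Matrix.of_apply, Fin.ext_iff, hLdef]
      split_ifs <;> first | ring1 | (exfalso; omega)
    rw [hstart, Finset.sum_congr rfl (fun j _ => hsum j)]
    rw [Finset.sum_add_distrib]
    simp [Finset.sum_ite_eq', h1i]

end STAux

/-- `τ*` is a fundamental domain for the translation action of `Aℤ^d`
on `ℝ^d`: every point of `ℝ^d` lies in exactly one translate `τ* + Av`, `v ∈ ℤ^d`
(the translates are pairwise disjoint and cover `ℝ^d`, i.e. they tile `ℝ^d`
periodically). -/
theorem superTile_fundamental_domain (d : ℕ) (hd : 1 ≤ d) (α : ℝ)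
    (h0 : 0 < α) (h1 : α < 1) :
    ∀ x : Fin d → ℝ, ∃! v : Fin d → ℤ,
      x - (Amat d α).mulVec (fun i => (v i : ℝ)) ∈ superTile d α := by
  intro x
  classical
  open STAux in
  set X : ℕ → ℝ := fun i => if h : i < d then x ⟨i, h⟩ else 0 with hXdef
  have hX : ∀ j : Fin d, X (j : ℕ) = x j := by
    intro j
    simp [hXdef, j.isLt]
  set L : Fin d := ⟨d - 1, by omega⟩ with hLdef
  -- coordinates of the difference, for a general integer vector vv
  have hco : ∀ (vv : Fin d → ℤ) (j : Fin d),
      x j - (Amat d α).mulVec (fun i => (vv i : ℝ)) j =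
        X (j : ℕ)
        - (if (j : ℕ) = d - 1 then 2 - α else 1 - α) * (vv L : ℝ)
        - (if (j : ℕ) = d - 1 then 0 else (vv j : ℝ))
        + (if _ : 1 ≤ (j : ℕ) then α * (vv ⟨(j : ℕ) - 1, by omega⟩ : ℝ) else 0) := by
    intro vv j
    rw [STAux.mulVec_Amat hd α (fun i => (vv i : ℝ)) j, hX]
    by_cases h1j : 1 ≤ (j : ℕ) <;> simp [h1j, hLdef] <;> ring
  -- value at the last coordinate, for a vector whose first coordinates are forced
  have hyL : ∀ (vv : Fin d → ℤ),
      (∀ i : Fin d, (i : ℕ) ≠ d - 1 → vv i = W α X (vv L) ((i : ℕ) + 1)) →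
      x L - (Amat d α).mulVec (fun i => (vv i : ℝ)) L = G d α X (vv L) := by
    intro vv hvv
    rw [hco]
    have hLv : ((L : Fin d) : ℕ) = d - 1 := rfl
    by_cases h2 : 1 ≤ (L : ℕ)
    · rw [dif_pos h2]
      have hne : ((⟨(L : ℕ) - 1, by omega⟩ : Fin d) : ℕ) ≠ d - 1 := by
        simp only [hLv]; omega
      rw [hvv _ hne]
      have he : ((⟨(L : ℕ) - 1, by omega⟩ : Fin d) : ℕ) + 1 = d - 1 := by
        simp only [hLv]; omega
      rw [he]
      simp only [hLv, G]
      norm_num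
      ring
    · rw [dif_neg h2]
      have hd1 : d - 1 = 0 := by
        have := hLv; omega
      simp only [hLv, if_pos rfl, G, hd1]
      norm_num [W]
  -- value at a non-last coordinate
  have hyj : ∀ (vv : Fin d → ℤ) (j : Fin d), (j : ℕ) < d - 1 →
      ((1 ≤ (j : ℕ)) → vv ⟨(j : ℕ) - 1, by omega⟩ = W α X (vv L) (j : ℕ)) →
      x j - (Amat d α).mulVec (fun i => (vv i : ℝ)) j
        = u α X (vv L) (j : ℕ) - (vv j : ℝ) := by
    intro vv j hj hprev
    rw [hco]
    have hne : (j : ℕ) ≠ d - 1 := by omega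
    rw [if_neg hne, if_neg hne]
    by_cases h2 : 1 ≤ (j : ℕ)
    · rw [dif_pos h2, hprev h2]
      simp only [u]
      ring
    · rw [dif_neg h2]
      have hj0 : (j : ℕ) = 0 := by omega
      simp only [u, hj0, W]
      push_cast
      ring
  -- the canonical lattice vector with last coordinate m
  set vOf : ℤ → Fin d → ℤ :=
    fun m i => if (i : ℕ) = d - 1 then m else W α X m ((i : ℕ) + 1) with hvOf
  have hvOfL : ∀ m, vOf m L = m := by
    intro m; simp [hvOf, hLdef]
  have hvOfP : ∀ m (i : Fin d), (i : ℕ) ≠ d - 1 →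
      vOf m i = W α X (vOf m L) ((i : ℕ) + 1) := by
    intro m i hi
    rw [hvOfL]
    simp [hvOf, hi]
  have hjL : ∀ j : Fin d, (j : ℕ) = d - 1 → j = L := by
    intro j hj
    exact Fin.ext (by rw [hj])
  have hyOfL : ∀ m, x L - (Amat d α).mulVec (fun i => ((vOf m) i : ℝ)) L = G d α X m := by
    intro m
    have := hyL (vOf m) (hvOfP m)
    rwa [hvOfL] at this
  have hyOfj : ∀ m (j : Fin d), (j : ℕ) < d - 1 →
      x j - (Amat d α).mulVec (fun i => ((vOf m) i : ℝ)) j = Int.fract (u α X m (j : ℕ)) := by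
    intro m j hj
    have hprev : (1 ≤ (j : ℕ)) → vOf m ⟨(j : ℕ) - 1, by omega⟩ = W α X (vOf m L) (j : ℕ) := by
      intro h2
      rw [hvOfL]
      show (if ((j : ℕ) - 1 : ℕ) = d - 1 then m else W α X m (((j : ℕ) - 1) + 1))
            = W α X m (j : ℕ)
      rw [if_neg (by omega : ¬ ((j : ℕ) - 1 : ℕ) = d - 1)]
      congr 1
      omega
    have h := hyj (vOf m) j hj hprev
    rw [hvOfL] at h
    rw [h]
    have hje : vOf m j = W α X m ((j : ℕ) + 1) := by
      show (if (j : ℕ) = d - 1 then m else W α X m ((j : ℕ) + 1)) = W α X m ((j : ℕ) + 1)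
      rw [if_neg (by omega : ¬ (j : ℕ) = d - 1)]
    rw [hje, W_succ]
    rw [Int.self_sub_floor]
  -- membership characterization for the canonical vectors
  have hmemOf : ∀ m',
      (x - (Amat d α).mulVec (fun i => ((vOf m') i : ℝ))) ∈ superTile d α
        ↔ (0 ≤ G d α X m' ∧ G d α X (m' + 1) < 0) := by
    intro m'
    have hδ := (key α X h0 h1 m' (d - 1)).1
    have hδiff := (key α X h0 h1 m' (d - 1)).2
    have hstep := G_step d α X m'
    simp only [superTile, mem_diff, mem_setOf_eq, Pi.sub_apply]
    constructor
    · rintro ⟨⟨hbox1, hbox2⟩, hnotch⟩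
      have hGm := hbox2 L rfl
      rw [hyOfL m'] at hGm
      rcases hδ with hδ0 | hδ1
      · have hbase : ∀ k < d - 1, 1 - α ≤ Int.fract (u α X m' k) := hδiff.mp hδ0
        have hcast0 : ((W α X m' (d-1) - W α X (m'+1) (d-1) : ℤ) : ℝ) = 0 := by
          rw [hδ0]; norm_num
        have hL2 : ¬ (2 - α ≤ G d α X m' ∧ G d α X m' < 2) := by
          intro hc
          apply hnotch
          constructor
          · intro j hj
            rw [hyOfj m' j hj]
            exact ⟨hbase _ hj, Int.fract_lt_one _⟩
          · intro j hj
            rw [hjL j hj, hyOfL]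
            exact hc
        have hlt : G d α X m' < 2 - α := by
          by_contra hc
          push_neg at hc
          exact hL2 ⟨hc, hGm.2⟩
        refine ⟨hGm.1, ?_⟩
        rw [hstep, hcast0]
        linarith
      · have hcast1 : ((W α X m' (d-1) - W α X (m'+1) (d-1) : ℤ) : ℝ) = 1 := by
          rw [hδ1]; norm_num
        refine ⟨hGm.1, ?_⟩
        rw [hstep, hcast1]
        linarith [hGm.2]
    · rintro ⟨hge, hlt⟩
      have hGm2 : G d α X m' < 2 := by
        rcases hδ with hδ0 | hδ1
        · have hcast0 : ((W α X m' (d-1) - W α X (m'+1) (d-1) : ℤ) : ℝ) = 0 := by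
            rw [hδ0]; norm_num
          rw [hstep, hcast0] at hlt
          linarith
        · have hcast1 : ((W α X m' (d-1) - W α X (m'+1) (d-1) : ℤ) : ℝ) = 1 := by
            rw [hδ1]; norm_num
          rw [hstep, hcast1] at hlt
          linarith
      refine ⟨⟨?_, ?_⟩, ?_⟩
      · intro j hj
        rw [hyOfj m' j hj]
        exact ⟨Int.fract_nonneg _, Int.fract_lt_one _⟩
      · intro j hj
        rw [hjL j hj, hyOfL]
        exact ⟨hge, hGm2⟩
      · rintro ⟨hcl1, hcl2⟩
        have hbase : ∀ k < d - 1, 1 - α ≤ Int.fract (u α X m' k) := by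
          intro k hk
          have hk' : ((⟨k, by omega⟩ : Fin d) : ℕ) < d - 1 := hk
          have := hcl1 ⟨k, by omega⟩ hk'
          rw [hyOfj m' ⟨k, by omega⟩ hk'] at this
          exact this.1
        have hδ0 : W α X m' (d - 1) - W α X (m' + 1) (d - 1) = 0 := hδiff.mpr hbase
        have h2a := hcl2 L rfl
        rw [hyOfL] at h2a
        have hcast0 : ((W α X m' (d-1) - W α X (m'+1) (d-1) : ℤ) : ℝ) = 0 := by
          rw [hδ0]; norm_num
        rw [hstep, hcast0] at hlt
        linarith [h2a.1]
  -- the unique sign change of G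
  obtain ⟨m, hm, hmuniq⟩ := exists_unique_sign d α X h0 h1
  refine ⟨vOf m, (hmemOf m).mpr hm, ?_⟩
  intro v hv
  have hv' := hv
  simp only [superTile, mem_diff, mem_setOf_eq, Pi.sub_apply] at hv'
  set m' := v L with hm'def
  -- the first coordinates of any solution are forced
  have hclaim : ∀ i : ℕ, i < d - 1 → ∀ (hi : i < d), v ⟨i, hi⟩ = W α X m' (i + 1) := by
    intro i
    induction i with
    | zero =>
      intro hilt hi
      have hb := hv'.1.1 ⟨0, hi⟩ hilt
      have hyy := hyj v ⟨0, hi⟩ hilt (fun h2 => absurd h2 (by norm_num))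
      rw [hyy] at hb
      have hfl : ⌊u α X m' 0⌋ = v ⟨0, hi⟩ := by
        rw [Int.floor_eq_iff]
        constructor
        · linarith [hb.1]
        · push_cast
          linarith [hb.2]
      rw [W_succ]
      exact hfl.symm
    | succ i ih =>
      intro hilt hi
      have hilt' : i < d - 1 := by omega
      have hb := hv'.1.1 ⟨i + 1, hi⟩ hilt
      have hprev : (1 ≤ ((⟨i + 1, hi⟩ : Fin d) : ℕ)) →
          v ⟨((⟨i + 1, hi⟩ : Fin d) : ℕ) - 1, by omega⟩ = W α X (v L) ((⟨i + 1, hi⟩ : Fin d) : ℕ) := by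
        intro _
        exact ih hilt' (by omega)
      have hyy := hyj v ⟨i + 1, hi⟩ hilt hprev
      rw [hyy] at hb
      have hfl : ⌊u α X m' (i + 1)⌋ = v ⟨i + 1, hi⟩ := by
        rw [Int.floor_eq_iff]
        constructor
        · linarith [hb.1]
        · push_cast
          linarith [hb.2]
      rw [W_succ]
      exact hfl.symm
  have hveq : v = vOf m' := by
    funext i
    by_cases hi : (i : ℕ) = d - 1
    · rw [hjL i hi]
      rw [hvOfL]
    · have hlt : (i : ℕ) < d - 1 := by
        have := i.isLt; omega
      have h1' := hclaim (i : ℕ) hlt i.isLt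
      rw [Fin.eta] at h1'
      rw [h1']
      simp [hvOf, hi]
  rw [hveq] at hv
  have hsign := (hmemOf m').mp hv
  have : m' = m := hmuniq m' hsign
  rw [hveq, this]
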